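/- Let u and v be integers with u > |v| ≥ 1 and gcd(u,v) = 1, and let f(x,y) = ux + vy and g(x,y) = ux − vy. Then |f(A)| = |g(A)| for every set A of integers with |A| = 3. -/
import Mathlib

set_option maxHeartbeats 1000000

/-- The image of a finite set `A` of integers under the binary linear form
`f(x,y) = u x + v y`. -/
def binFormImage (u v : ℤ) (A : Finset ℤ) : Finset ℤ :=
  (A ×ˢ A).image fun p => u * p.1 + v * p.2

lemma expand3' (u v a b c : ℤ) : binFormImage u v {a,b,c} =
    {u*a+v*a, u*a+v*b, u*a+v*c, u*b+v*a, u*b+v*b, u*b+v*c, u*c+v*a, u*c+v*b, u*c+v*c} := by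
  ext w
  simp only [binFormImage, Finset.mem_image, Finset.mem_product, Finset.mem_insert,
    Finset.mem_singleton, Prod.exists]
  constructor
  · rintro ⟨x, y, ⟨hx, hy⟩, rfl⟩
    rcases hx with rfl|rfl|rfl <;> rcases hy with rfl|rfl|rfl <;> tauto
  · rintro (rfl|rfl|rfl|rfl|rfl|rfl|rfl|rfl|rfl)
    · exact ⟨a, a, ⟨Or.inl rfl, Or.inl rfl⟩, rfl⟩
    · exact ⟨a, b, ⟨Or.inl rfl, Or.inr (Or.inl rfl)⟩, rfl⟩
    · exact ⟨a, c, ⟨Or.inl rfl, Or.inr (Or.inr rfl)⟩, rfl⟩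
    · exact ⟨b, a, ⟨Or.inr (Or.inl rfl), Or.inl rfl⟩, rfl⟩
    · exact ⟨b, b, ⟨Or.inr (Or.inl rfl), Or.inr (Or.inl rfl)⟩, rfl⟩
    · exact ⟨b, c, ⟨Or.inr (Or.inl rfl), Or.inr (Or.inr rfl)⟩, rfl⟩
    · exact ⟨c, a, ⟨Or.inr (Or.inr rfl), Or.inl rfl⟩, rfl⟩
    · exact ⟨c, b, ⟨Or.inr (Or.inr rfl), Or.inr (Or.inl rfl)⟩, rfl⟩
    · exact ⟨c, c, ⟨Or.inr (Or.inr rfl), Or.inr (Or.inr rfl)⟩, rfl⟩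

lemma aux1 (u v : ℤ) (hv : 1 ≤ v) (hu : v < u) (hg : Int.gcd u v = 1) :
    u*u - u*v - v*v ≠ 0 := by
  intro h
  have hco : IsCoprime u v := Int.isCoprime_iff_gcd_eq_one.mpr hg
  have hvd : v ∣ u*u := ⟨u + v, by linear_combination h⟩
  have hun : IsUnit v := (hco.mul_left hco).isUnit_of_dvd' hvd dvd_rfl
  rcases Int.isUnit_iff.mp hun with h1 | h1
  · subst h1; nlinarith
  · omega

theorem key_pos (u v a b c : ℤ) (hv : 1 ≤ v) (hu : v < u) (hg : Int.gcd u v = 1)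
    (hab : a < b) (hbc : b < c) :
    (binFormImage u v {a,b,c}).card = (binFormImage u (-v) {a,b,c}).card := by
  have hv0 : (0:ℤ) < v := by omega
  have hu0 : (0:ℤ) < u := by omega
  have G1 : v*a < v*b := mul_lt_mul_of_pos_left hab hv0
  have G2 : v*b < v*c := mul_lt_mul_of_pos_left hbc hv0
  have G3 : u*a < u*b := mul_lt_mul_of_pos_left hab hu0
  have G4 : u*b < u*c := mul_lt_mul_of_pos_left hbc hu0
  have G5 : v*b - v*a < u*b - u*a := by
    have h := mul_lt_mul_of_pos_right hu (show (0:ℤ) < b - a by omega)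
    nlinarith [h]
  have G6 : v*c - v*b < u*c - u*b := by
    have h := mul_lt_mul_of_pos_right hu (show (0:ℤ) < c - b by omega)
    nlinarith [h]
  have G7 : 1 ≤ v*b - v*a := by linarith [Int.add_one_le_iff.mpr G1]
  have G8 : 1 ≤ v*c - v*b := by linarith [Int.add_one_le_iff.mpr G2]
  have G9 : (u*b - u*a = u*c - u*b) ↔ (v*b - v*a = v*c - v*b) := by
    constructor <;> intro h
    · have h' : u * ((b - a) - (c - b)) = 0 := by linear_combination h
      rcases mul_eq_zero.mp h' with h'' | h''
      · omega
      · linear_combination v * h''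
    · have h' : v * ((b - a) - (c - b)) = 0 := by linear_combination h
      rcases mul_eq_zero.mp h' with h'' | h''
      · omega
      · linear_combination u * h''
  have G10 : ¬(u*b - u*a = v*c - v*b ∧ u*c - u*b = v*b - v*a) := by
    rintro ⟨e1, e2⟩
    have key : (u*u - v*v) * ((b - a) * (c - b)) = 0 := by
      linear_combination (u*c - u*b) * e1 + (v*c - v*b) * e2
    rcases mul_eq_zero.mp key with h | h
    · nlinarith
    · rcases mul_eq_zero.mp h with h | h <;> omega
  have G11 : ¬(u*b - u*a = v*c - v*a ∧ u*c - u*b = v*b - v*a) := by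
    rintro ⟨e1, e2⟩
    have key : (u*u - u*v - v*v) * (c - b) = 0 := by
      linear_combination (u - v) * e2 + v * e1
    rcases mul_eq_zero.mp key with h | h
    · exact aux1 u v hv hu hg h
    · omega
  have G12 : ¬(u*c - u*b = v*c - v*a ∧ u*b - u*a = v*c - v*b) := by
    rintro ⟨e1, e2⟩
    have key : (u*u - u*v - v*v) * (b - a) = 0 := by
      linear_combination (u - v) * e2 + v * e1
    rcases mul_eq_zero.mp key with h | h
    · exact aux1 u v hv hu hg h
    · omega
  rw [expand3' u v a b c, expand3' u (-v) a b c]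
  simp only [neg_mul]
  revert G1 G2 G3 G4 G5 G6 G7 G8 G9 G10 G11 G12
  generalize u*a = UA
  generalize u*b = UB
  generalize u*c = UC
  generalize v*a = RA
  generalize v*b = RB
  generalize v*c = RC
  intro G1 G2 G3 G4 G5 G6 G7 G8 G9 G10 G11 G12
  by_cases hq : UB - UA = UC - UB
  · have hq2 := G9.mp hq
    by_cases h2 : UB - UA = 2*RB - 2*RA
    · -- arithmetic progression with u = 2v : both cards are 7
      rw [show ({UA + RA, UA + RB, UA + RC, UB + RA, UB + RB, UB + RC, UC + RA, UC + RB, UC + RC} : Finset ℤ) = {UA + RA, UA + RB, UA + RC, UB + RB, UB + RC, UC + RB, UC + RC} from by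
            ext w; simp only [Finset.mem_insert, Finset.mem_singleton]; omega,
          show ({UA + -RA, UA + -RB, UA + -RC, UB + -RA, UB + -RB, UB + -RC, UC + -RA, UC + -RB, UC + -RC} : Finset ℤ) = {UA + -RA, UA + -RB, UA + -RC, UB + -RA, UB + -RB, UC + -RA, UC + -RB} from by
            ext w; simp only [Finset.mem_insert, Finset.mem_singleton]; omega]
      repeat rw [Finset.card_insert_of_notMem]
      all_goals simp only [Finset.card_singleton, Finset.mem_insert, Finset.mem_singleton]
      all_goals omega
    · -- arithmetic progression, u ≠ 2v : both cards are 9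
      repeat rw [Finset.card_insert_of_notMem]
      all_goals simp only [Finset.card_singleton, Finset.mem_insert, Finset.mem_singleton]
      all_goals omega
  · by_cases hb1 : UB - UA = RC - RA
    · -- u(b-a) = v(c-a) : both cards are 8
      rw [show ({UA + RA, UA + RB, UA + RC, UB + RA, UB + RB, UB + RC, UC + RA, UC + RB, UC + RC} : Finset ℤ) = {UA + RA, UA + RB, UA + RC, UB + RB, UB + RC, UC + RA, UC + RB, UC + RC} from by
            ext w; simp only [Finset.mem_insert, Finset.mem_singleton]; omega,
          show ({UA + -RA, UA + -RB, UA + -RC, UB + -RA, UB + -RB, UB + -RC, UC + -RA, UC + -RB, UC + -RC} : Finset ℤ) = {UA + -RA, UA + -RB, UA + -RC, UB + -RA, UB + -RB, UC + -RA, UC + -RB, UC + -RC} from by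
            ext w; simp only [Finset.mem_insert, Finset.mem_singleton]; omega]
      repeat rw [Finset.card_insert_of_notMem]
      all_goals simp only [Finset.card_singleton, Finset.mem_insert, Finset.mem_singleton]
      all_goals omega
    · by_cases hb2 : UC - UB = RC - RA
      · -- u(c-b) = v(c-a) : both cards are 8
        rw [show ({UA + RA, UA + RB, UA + RC, UB + RA, UB + RB, UB + RC, UC + RA, UC + RB, UC + RC} : Finset ℤ) = {UA + RA, UA + RB, UA + RC, UB + RA, UB + RB, UB + RC, UC + RB, UC + RC} from by
              ext w; simp only [Finset.mem_insert, Finset.mem_singleton]; omega,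
            show ({UA + -RA, UA + -RB, UA + -RC, UB + -RA, UB + -RB, UB + -RC, UC + -RA, UC + -RB, UC + -RC} : Finset ℤ) = {UA + -RA, UA + -RB, UA + -RC, UB + -RA, UB + -RB, UB + -RC, UC + -RA, UC + -RB} from by
              ext w; simp only [Finset.mem_insert, Finset.mem_singleton]; omega]
        repeat rw [Finset.card_insert_of_notMem]
        all_goals simp only [Finset.card_singleton, Finset.mem_insert, Finset.mem_singleton]
        all_goals omega
      · by_cases hb3 : UB - UA = RC - RB
        · -- u(b-a) = v(c-b) : both cards are 8
          rw [show ({UA + RA, UA + RB, UA + RC, UB + RA, UB + RB, UB + RC, UC + RA, UC + RB, UC + RC} : Finset ℤ) = {UA + RA, UA + RB, UA + RC, UB + RA, UB + RC, UC + RA, UC + RB, UC + RC} from by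
                ext w; simp only [Finset.mem_insert, Finset.mem_singleton]; omega,
              show ({UA + -RA, UA + -RB, UA + -RC, UB + -RA, UB + -RB, UB + -RC, UC + -RA, UC + -RB, UC + -RC} : Finset ℤ) = {UA + -RA, UA + -RB, UA + -RC, UB + -RA, UB + -RB, UC + -RA, UC + -RB, UC + -RC} from by
                ext w; simp only [Finset.mem_insert, Finset.mem_singleton]; omega]
          repeat rw [Finset.card_insert_of_notMem]
          all_goals simp only [Finset.card_singleton, Finset.mem_insert, Finset.mem_singleton]
          all_goals omega
        · by_cases hb4 : UC - UB = RB - RA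
          · -- u(c-b) = v(b-a) : both cards are 8
            rw [show ({UA + RA, UA + RB, UA + RC, UB + RA, UB + RB, UB + RC, UC + RA, UC + RB, UC + RC} : Finset ℤ) = {UA + RA, UA + RB, UA + RC, UB + RA, UB + RB, UB + RC, UC + RB, UC + RC} from by
                  ext w; simp only [Finset.mem_insert, Finset.mem_singleton]; omega,
                show ({UA + -RA, UA + -RB, UA + -RC, UB + -RA, UB + -RB, UB + -RC, UC + -RA, UC + -RB, UC + -RC} : Finset ℤ) = {UA + -RA, UA + -RB, UA + -RC, UB + -RA, UB + -RB, UB + -RC, UC + -RA, UC + -RC} from by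
                  ext w; simp only [Finset.mem_insert, Finset.mem_singleton]; omega]
            repeat rw [Finset.card_insert_of_notMem]
            all_goals simp only [Finset.card_singleton, Finset.mem_insert, Finset.mem_singleton]
            all_goals omega
          · -- no relation : both cards are 9
            repeat rw [Finset.card_insert_of_notMem]
            all_goals simp only [Finset.card_singleton, Finset.mem_insert, Finset.mem_singleton]
            all_goals omega

theorem stmt_5 (u v : ℤ) (h1 : 1 ≤ |v|) (h2 : |v| < u) (h3 : Int.gcd u v = 1)
    (A : Finset ℤ) (hA : A.card = 3) :
    (binFormImage u v A).card = (binFormImage u (-v) A).card := by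
  obtain ⟨x, y, z, hxy, hxz, hyz, rfl⟩ := Finset.card_eq_three.mp hA
  obtain ⟨a, b, c, hab, hbc, hE⟩ : ∃ a b c : ℤ, a < b ∧ b < c ∧ ({x, y, z} : Finset ℤ) = {a, b, c} := by
    rcases hxy.lt_or_gt with o1 | o1 <;> rcases hxz.lt_or_gt with o2 | o2 <;>
      rcases hyz.lt_or_gt with o3 | o3
    · exact ⟨x, y, z, o1, o3, rfl⟩
    · exact ⟨x, z, y, o2, o3, by ext w; simp only [Finset.mem_insert, Finset.mem_singleton]; tauto⟩
    · omega
    · exact ⟨z, x, y, o2, o1, by ext w; simp only [Finset.mem_insert, Finset.mem_singleton]; tauto⟩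
    · exact ⟨y, x, z, o1, o2, by ext w; simp only [Finset.mem_insert, Finset.mem_singleton]; tauto⟩
    · omega
    · exact ⟨y, z, x, o3, o2, by ext w; simp only [Finset.mem_insert, Finset.mem_singleton]; tauto⟩
    · exact ⟨z, y, x, o3, o1, by ext w; simp only [Finset.mem_insert, Finset.mem_singleton]; tauto⟩
  rw [hE]
  rcases abs_cases v with ⟨ha, hb⟩ | ⟨ha, hb⟩
  · exact key_pos u v a b c (by omega) (by omega) h3 hab hbc
  · have h3' : Int.gcd u (-v) = 1 := by
      rw [Int.gcd, Int.natAbs_neg]; exact h3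
    have := key_pos u (-v) a b c (by omega) (by omega) h3' hab hbc
    rw [neg_neg] at this
    exact this.symm
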